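/- Let A ∈ ℝ^{m×n}, let δ, ε ∈ (0,1), and let s be a positive integer with s ≥ (n² + n)/(δ·ε²). Draw a random count sketch matrix S ∈ ℝ^{s×m} as follows: a function h : {1,…,m} → {1,…,s} with entries independent and uniformly distributed on {1,…,s}, and signs d : {1,…,m} → {−1,+1} with entries independent and uniformly distributed on {−1,+1}, all independent of each other; define S by S(i,j) = d(j) if h(j) = i and S(i,j) = 0 otherwise. Then with probability at least 1 − δ, the matrix S satisfies (1−ε)‖Ax‖₂² ≤ ‖SAx‖₂² ≤ (1+ε)‖Ax‖₂² for all x ∈ ℝⁿ. -/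

import Mathlib

open Matrix

/-- The Euclidean (ℓ₂) norm of a real vector. -/
noncomputable def e2norm {k : ℕ} (v : Fin k → ℝ) : ℝ := Real.sqrt (∑ i, (v i) ^ 2)

/-- The count sketch matrix determined by a hash function `h : {1,…,m} → {1,…,s}` and
signs `d : {1,…,m} → {−1,+1}` (encoded as `Bool`, `true ↦ +1`, `false ↦ −1`):
`S i j = d j` if `h j = i` and `0` otherwise. -/
def countSketch {m s : ℕ} (h : Fin m → Fin s) (d : Fin m → Bool) :
    Matrix (Fin s) (Fin m) ℝ :=
  fun i j => if h j = i then (if d j then 1 else -1) else 0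

namespace CountSketchAux

open Finset

lemma e2norm_sq {k : ℕ} (v : Fin k → ℝ) : e2norm v ^ 2 = ∑ i, v i ^ 2 :=
  Real.sq_sqrt (Finset.sum_nonneg fun _ _ => sq_nonneg _)

variable {m s : ℕ}

def sg (d : Fin m → Bool) (j : Fin m) : ℝ := if d j then 1 else -1

lemma sg_sq (d : Fin m → Bool) (j : Fin m) : sg d j * sg d j = 1 := by
  unfold sg; by_cases h : d j <;> simp [h]

def csM (h : Fin m → Fin s) (d : Fin m → Bool) (j k : Fin m) : ℝ :=
  if j = k then 0 else (if h j = h k then 1 else 0) * sg d j * sg d k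

def csQ (u v : Fin m → ℝ) (ω : (Fin m → Fin s) × (Fin m → Bool)) : ℝ :=
  ∑ j, ∑ k, u j * v k * csM ω.1 ω.2 j k

lemma col_dot (h : Fin m → Fin s) (d : Fin m → Bool) (j k : Fin m) :
    ∑ i, countSketch h d i j * countSketch h d i k
      = (if h j = h k then 1 else 0) * sg d j * sg d k := by
  rw [Finset.sum_eq_single (h j)]
  · by_cases hc : h k = h j <;> simp [countSketch, sg, hc, eq_comm (a := h j)]
  · intro i _ hi
    simp [countSketch, Ne.symm hi]
  · simp

lemma sum_sq_mulVec (h : Fin m → Fin s) (d : Fin m → Bool) (y : Fin m → ℝ) :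
    ∑ i, ((countSketch h d).mulVec y i) ^ 2 = ∑ j, y j ^ 2 + csQ y y (h, d) := by
  have e1 : ∀ i : Fin s, ((countSketch h d).mulVec y i) ^ 2
      = ∑ j, ∑ k, (y j * y k) * (countSketch h d i j * countSketch h d i k) := by
    intro i
    rw [Matrix.mulVec, dotProduct, pow_two, Finset.sum_mul_sum]
    exact Finset.sum_congr rfl fun j _ => Finset.sum_congr rfl fun k _ => by ring
  calc ∑ i, ((countSketch h d).mulVec y i) ^ 2
      = ∑ j, ∑ k, (y j * y k) * ∑ i, countSketch h d i j * countSketch h d i k := by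
        rw [Finset.sum_congr rfl fun i _ => e1 i, Finset.sum_comm]
        refine Finset.sum_congr rfl fun j _ => ?_
        rw [Finset.sum_comm]
        exact Finset.sum_congr rfl fun k _ => by rw [Finset.mul_sum]
    _ = ∑ j, ∑ k, ((if j = k then y j * y k else 0) + y j * y k * csM h d j k) := by
        refine Finset.sum_congr rfl fun j _ => Finset.sum_congr rfl fun k _ => ?_
        rw [col_dot]
        by_cases hjk : j = k
        · subst hjk; by_cases hb : d j <;> simp [csM, sg, hb]
        · simp only [csM, if_neg hjk]; ring
    _ = ∑ j, y j ^ 2 + csQ y y (h, d) := by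
        unfold csQ
        rw [← Finset.sum_add_distrib]
        refine Finset.sum_congr rfl fun j _ => ?_
        rw [Finset.sum_add_distrib, Finset.sum_ite_eq]
        simp [pow_two]

lemma count_hash {j k : Fin m} (hjk : j ≠ k) :
    ∑ h : Fin m → Fin s, (if h j = h k then (1:ℝ) else 0) = (s:ℝ)^(m-1) := by
  classical
  let e := Equiv.piSplitAt k (fun _ : Fin m => Fin s)
  rw [← Equiv.sum_comp e.symm (fun h => if h j = h k then (1:ℝ) else 0)]
  have happ : ∀ (p : Fin s × ({j' : Fin m // j' ≠ k} → Fin s)),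
      (e.symm p) j = p.2 ⟨j, hjk⟩ ∧ (e.symm p) k = p.1 := by
    intro p
    constructor
    · simp [e, Equiv.piSplitAt_symm_apply, dif_neg hjk]
    · simp [e, Equiv.piSplitAt_symm_apply]
  calc ∑ p : Fin s × ({j' : Fin m // j' ≠ k} → Fin s),
        (if (e.symm p) j = (e.symm p) k then (1:ℝ) else 0)
      = ∑ p : Fin s × ({j' : Fin m // j' ≠ k} → Fin s),
        (if p.2 ⟨j, hjk⟩ = p.1 then (1:ℝ) else 0) := by
        refine Finset.sum_congr rfl fun p _ => ?_
        rw [(happ p).1, (happ p).2]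
    _ = ∑ g : {j' : Fin m // j' ≠ k} → Fin s, ∑ a : Fin s,
        (if g ⟨j, hjk⟩ = a then (1:ℝ) else 0) := by
        rw [Fintype.sum_prod_type]; rw [Finset.sum_comm]
    _ = ∑ g : {j' : Fin m // j' ≠ k} → Fin s, (1:ℝ) := by
        refine Finset.sum_congr rfl fun g _ => ?_
        simp
    _ = (s:ℝ)^(m-1) := by
        rw [Finset.sum_const, nsmul_eq_mul, mul_one]
        norm_cast
        rw [Finset.card_univ, Fintype.card_fun, Fintype.card_fin]
        congr 1
        have : Fintype.card {j' : Fin m // j' ≠ k} = m - 1 := by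
          rw [Fintype.card_subtype_compl, Fintype.card_fin, Fintype.card_subtype_eq]
        rw [this]

lemma sum_flip_zero (t : Fin m) (f : (Fin m → Bool) → ℝ)
    (hf : ∀ d, f (Function.update d t (!d t)) = - f d) :
    ∑ d : Fin m → Bool, f d = 0 := by
  classical
  refine Finset.sum_involution (fun d _ => Function.update d t (!d t)) ?_ ?_ ?_ ?_
  · intro d _; rw [hf]; ring
  · intro d _ _
    intro heq
    have := congrFun heq t
    simp at this
  · intro d _; exact Finset.mem_univ _
  · intro d _
    funext a
    by_cases ha : a = t
    · subst ha; simp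
    · simp [Function.update_of_ne ha]

lemma sg_update_ne (d : Fin m → Bool) (t a : Fin m) (b : Bool) (ha : a ≠ t) :
    sg (Function.update d t b) a = sg d a := by
  simp [sg, Function.update_of_ne ha]

lemma sg_update_self (d : Fin m → Bool) (t : Fin m) :
    sg (Function.update d t (!d t)) t = - sg d t := by
  by_cases hb : d t <;> simp [sg, hb]

lemma sum_signs_zero {j k p q : Fin m} (hjk : j ≠ k) (hpq : p ≠ q)
    (hmatch : ¬((p = j ∧ q = k) ∨ (p = k ∧ q = j))) :
    ∑ d : Fin m → Bool, sg d j * sg d k * sg d p * sg d q = 0 := by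
  push_neg at hmatch
  obtain ⟨h1, h2⟩ := hmatch
  by_cases hjp : j = p
  · have hqk : q ≠ k := fun hq => (h1 hjp.symm) hq
    have hkp : k ≠ p := fun hk => hjk (hjp.trans hk.symm)
    refine sum_flip_zero k _ (fun d => ?_)
    rw [sg_update_ne d k j _ hjk, sg_update_self,
        sg_update_ne d k p _ (Ne.symm hkp), sg_update_ne d k q _ hqk]
    ring
  · by_cases hjq : j = q
    · have hpk : p ≠ k := fun hp => (h2 hp) hjq.symm
      have hkq : k ≠ q := fun hk => hjk (hjq.trans hk.symm)
      refine sum_flip_zero k _ (fun d => ?_)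
      rw [sg_update_ne d k j _ hjk, sg_update_self,
          sg_update_ne d k p _ hpk, sg_update_ne d k q _ (Ne.symm hkq)]
      ring
    · refine sum_flip_zero j _ (fun d => ?_)
      rw [sg_update_self, sg_update_ne d j k _ (Ne.symm hjk),
          sg_update_ne d j p _ (Ne.symm hjp), sg_update_ne d j q _ (Ne.symm hjq)]
      ring

lemma E4_eval (j k p q : Fin m) :
    ∑ ω : (Fin m → Fin s) × (Fin m → Bool), csM ω.1 ω.2 j k * csM ω.1 ω.2 p q
      = if j ≠ k ∧ ((p = j ∧ q = k) ∨ (p = k ∧ q = j))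
        then (2:ℝ)^m * (s:ℝ)^(m-1) else 0 := by
  classical
  by_cases hjk : j = k
  · rw [if_neg (by tauto)]
    apply Finset.sum_eq_zero; intro ω _; simp [csM, hjk]
  by_cases hpq : p = q
  · rw [if_neg (by intro hc; rcases hc.2 with ⟨h1,h2⟩|⟨h1,h2⟩ <;> exact hjk (by rw [← h1, ← h2, hpq]))]
    apply Finset.sum_eq_zero; intro ω _; simp [csM, hpq]
  have step1 : ∑ ω : (Fin m → Fin s) × (Fin m → Bool), csM ω.1 ω.2 j k * csM ω.1 ω.2 p q
      = ∑ h : Fin m → Fin s, ((if h j = h k then (1:ℝ) else 0) * (if h p = h q then (1:ℝ) else 0))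
          * ∑ d : Fin m → Bool, sg d j * sg d k * sg d p * sg d q := by
    rw [Fintype.sum_prod_type]
    refine Finset.sum_congr rfl fun h _ => ?_
    rw [Finset.mul_sum]
    refine Finset.sum_congr rfl fun d _ => ?_
    simp only [csM, if_neg hjk, if_neg hpq]
    ring
  rw [step1]
  by_cases hmatch : (p = j ∧ q = k) ∨ (p = k ∧ q = j)
  · rw [if_pos ⟨hjk, hmatch⟩]
    have hd : ∑ d : Fin m → Bool, sg d j * sg d k * sg d p * sg d q = (2:ℝ)^m := by
      have : ∀ d : Fin m → Bool, sg d j * sg d k * sg d p * sg d q = 1 := by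
        intro d
        rcases hmatch with ⟨h1, h2⟩ | ⟨h1, h2⟩ <;> rw [h1, h2]
        · linear_combination (sg d k * sg d k) * sg_sq d j + sg_sq d k
        · linear_combination (sg d j * sg d j) * sg_sq d k + sg_sq d j
      rw [Finset.sum_congr rfl fun d _ => this d, Finset.sum_const, nsmul_eq_mul, mul_one]
      simp [Finset.card_univ]
    have hh : ∀ h : Fin m → Fin s,
        (if h j = h k then (1:ℝ) else 0) * (if h p = h q then (1:ℝ) else 0)
          = (if h j = h k then (1:ℝ) else 0) := by
      intro h
      rcases hmatch with ⟨h1, h2⟩ | ⟨h1, h2⟩ <;> rw [h1, h2]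
      · by_cases hc : h j = h k <;> simp [hc]
      · by_cases hc : h j = h k
        · rw [if_pos hc, if_pos hc.symm]; norm_num
        · simp [hc]
    rw [hd]
    calc ∑ h : Fin m → Fin s, ((if h j = h k then (1:ℝ) else 0) * (if h p = h q then (1:ℝ) else 0)) * ((2:ℝ)^m)
          = (∑ h : Fin m → Fin s, (if h j = h k then (1:ℝ) else 0)) * (2:ℝ)^m := by
            rw [Finset.sum_mul]
            exact Finset.sum_congr rfl fun h _ => by rw [hh h]
      _ = (2:ℝ)^m * (s:ℝ)^(m-1) := by rw [count_hash hjk]; ring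
  · rw [if_neg (by tauto)]
    apply Finset.sum_eq_zero; intro h _
    rw [sum_signs_zero hjk hpq hmatch, mul_zero]

lemma sum_Q_sq (u v : Fin m → ℝ) :
    ∑ ω : (Fin m → Fin s) × (Fin m → Bool), csQ u v ω ^ 2
      = (2:ℝ)^m * (s:ℝ)^(m-1) *
        ∑ j, ∑ k, (if j = k then 0 else u j ^ 2 * v k ^ 2 + (u j * v j) * (u k * v k)) := by
  classical
  have exp : ∀ ω : (Fin m → Fin s) × (Fin m → Bool), csQ u v ω ^ 2
      = ∑ j, ∑ k, ∑ p, ∑ q, (u j * v k * (u p * v q)) * (csM ω.1 ω.2 j k * csM ω.1 ω.2 p q) := by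
    intro ω
    calc csQ u v ω ^ 2
        = ∑ j, ∑ p, (∑ k, u j * v k * csM ω.1 ω.2 j k) * (∑ q, u p * v q * csM ω.1 ω.2 p q) := by
          rw [csQ, pow_two, Finset.sum_mul_sum]
      _ = ∑ j, ∑ p, ∑ k, ∑ q, (u j * v k * (u p * v q)) * (csM ω.1 ω.2 j k * csM ω.1 ω.2 p q) := by
          refine Finset.sum_congr rfl fun j _ => Finset.sum_congr rfl fun p _ => ?_
          rw [Finset.sum_mul_sum]
          exact Finset.sum_congr rfl fun k _ => Finset.sum_congr rfl fun q _ => by ring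
      _ = ∑ j, ∑ k, ∑ p, ∑ q, (u j * v k * (u p * v q)) * (csM ω.1 ω.2 j k * csM ω.1 ω.2 p q) := by
          exact Finset.sum_congr rfl fun j _ => Finset.sum_comm
  calc ∑ ω : (Fin m → Fin s) × (Fin m → Bool), csQ u v ω ^ 2
      = ∑ j, ∑ k, ∑ p, ∑ q, (u j * v k * (u p * v q)) *
          ∑ ω : (Fin m → Fin s) × (Fin m → Bool), (csM ω.1 ω.2 j k * csM ω.1 ω.2 p q) := by
        rw [Finset.sum_congr rfl fun ω _ => exp ω, Finset.sum_comm]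
        refine Finset.sum_congr rfl fun j _ => ?_
        rw [Finset.sum_comm]
        refine Finset.sum_congr rfl fun k _ => ?_
        rw [Finset.sum_comm]
        refine Finset.sum_congr rfl fun p _ => ?_
        rw [Finset.sum_comm]
        exact Finset.sum_congr rfl fun q _ => (Finset.mul_sum _ _ _).symm
    _ = ∑ j, ∑ k, (if j = k then 0 else u j ^ 2 * v k ^ 2 + (u j * v j) * (u k * v k))
          * ((2:ℝ)^m * (s:ℝ)^(m-1)) := by
        refine Finset.sum_congr rfl fun j _ => Finset.sum_congr rfl fun k _ => ?_
        by_cases hjk : j = k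
        · rw [if_pos hjk, zero_mul]
          apply Finset.sum_eq_zero; intro p _
          apply Finset.sum_eq_zero; intro q _
          rw [E4_eval, if_neg (by tauto), mul_zero]
        · rw [if_neg hjk]
          have hsummand : ∀ p q : Fin m, (u j * v k * (u p * v q)) *
              (∑ ω : (Fin m → Fin s) × (Fin m → Bool), (csM ω.1 ω.2 j k * csM ω.1 ω.2 p q))
              = (if q = k then (if p = j then (u j * v k * (u j * v k)) * ((2:ℝ)^m * (s:ℝ)^(m-1)) else 0) else 0)
                + (if q = j then (if p = k then (u j * v k * (u k * v j)) * ((2:ℝ)^m * (s:ℝ)^(m-1)) else 0) else 0) := by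
            intro p q
            rw [E4_eval]
            by_cases hm1 : p = j ∧ q = k
            · obtain ⟨h3, h4⟩ := hm1
              rw [if_pos ⟨hjk, Or.inl ⟨h3, h4⟩⟩, h3, h4, if_pos rfl, if_pos rfl,
                  if_neg (fun hq : k = j => hjk hq.symm)]
              ring
            by_cases hm2 : p = k ∧ q = j
            · obtain ⟨h3, h4⟩ := hm2
              rw [if_pos ⟨hjk, Or.inr ⟨h3, h4⟩⟩, h3, h4,
                  if_neg (fun hq : j = k => hjk hq), if_pos rfl, if_pos rfl]
              ring
            · rw [if_neg (by tauto), mul_zero]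
              have e1 : (if q = k then (if p = j then (u j * v k * (u j * v k)) * ((2:ℝ)^m * (s:ℝ)^(m-1)) else 0) else 0) = 0 := by
                split_ifs with a b
                · exact absurd ⟨b, a⟩ hm1
                · rfl
                · rfl
              have e2 : (if q = j then (if p = k then (u j * v k * (u k * v j)) * ((2:ℝ)^m * (s:ℝ)^(m-1)) else 0) else 0) = 0 := by
                split_ifs with a b
                · exact absurd ⟨b, a⟩ hm2
                · rfl
                · rfl
              rw [e1, e2, add_zero]
          rw [Finset.sum_comm]
          rw [Finset.sum_congr rfl fun q _ => Finset.sum_congr rfl fun p _ => hsummand p q]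
          rw [Finset.sum_congr rfl fun q (_ : q ∈ Finset.univ) => Finset.sum_add_distrib,
              Finset.sum_add_distrib]
          have double : ∀ (c1 c2 : Fin m) (V : ℝ),
              (∑ x : Fin m, ∑ x1 : Fin m, if x = c1 then if x1 = c2 then V else 0 else 0) = V := by
            intro c1 c2 V
            rw [Finset.sum_eq_single c1 (fun x _ hx => Finset.sum_eq_zero fun x1 _ => if_neg hx)
                (fun hc => absurd (Finset.mem_univ c1) hc)]
            simp only [if_pos rfl]
            exact (Finset.sum_ite_eq' Finset.univ c2 fun _ => V).trans (if_pos (Finset.mem_univ c2))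
          rw [double k j _, double j k _]
          ring
    _ = (2:ℝ)^m * (s:ℝ)^(m-1) *
        ∑ j, ∑ k, (if j = k then 0 else u j ^ 2 * v k ^ 2 + (u j * v j) * (u k * v k)) := by
        simp only [Finset.mul_sum]
        exact Finset.sum_congr rfl fun j _ => Finset.sum_congr rfl fun k _ => mul_comm _ _

lemma R_le (u v : Fin m → ℝ) :
    (∑ j, ∑ k, (if j = k then 0 else u j ^ 2 * v k ^ 2 + (u j * v j) * (u k * v k)))
      ≤ (∑ j, u j ^ 2) * (∑ j, v j ^ 2) + (∑ j, u j * v j) ^ 2 := by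
  classical
  have split : ∀ j k : Fin m, (if j = k then (0:ℝ) else u j ^ 2 * v k ^ 2 + (u j * v j) * (u k * v k))
      = (u j ^ 2 * v k ^ 2 + (u j * v j) * (u k * v k))
        - (if j = k then u j ^ 2 * v k ^ 2 + (u j * v j) * (u k * v k) else 0) := by
    intro j k; split_ifs <;> ring
  calc (∑ j, ∑ k, (if j = k then (0:ℝ) else u j ^ 2 * v k ^ 2 + (u j * v j) * (u k * v k)))
      = (∑ j, ∑ k, (u j ^ 2 * v k ^ 2 + (u j * v j) * (u k * v k)))
        - ∑ j, (u j ^ 2 * v j ^ 2 + (u j * v j) * (u j * v j)) := by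
        rw [Finset.sum_congr rfl fun j _ => Finset.sum_congr rfl fun k _ => split j k]
        rw [Finset.sum_congr rfl fun j (_ : j ∈ Finset.univ) => Finset.sum_sub_distrib _ _,
            Finset.sum_sub_distrib]
        congr 1
        exact Finset.sum_congr rfl fun j _ =>
          (Finset.sum_ite_eq Finset.univ j _).trans (if_pos (Finset.mem_univ j))
    _ ≤ ∑ j, ∑ k, (u j ^ 2 * v k ^ 2 + (u j * v j) * (u k * v k)) := by
        have : (0:ℝ) ≤ ∑ j, (u j ^ 2 * v j ^ 2 + (u j * v j) * (u j * v j)) :=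
          Finset.sum_nonneg fun j _ => by nlinarith [sq_nonneg (u j * v j)]
        linarith
    _ = (∑ j, u j ^ 2) * (∑ j, v j ^ 2) + (∑ j, u j * v j) ^ 2 := by
        rw [Finset.sum_mul_sum, pow_two, Finset.sum_mul_sum, ← Finset.sum_add_distrib]
        exact Finset.sum_congr rfl fun j _ => by rw [← Finset.sum_add_distrib]

lemma Q_bilin {r : ℕ} (u : Fin r → Fin m → ℝ) (c : Fin r → ℝ) (y : Fin m → ℝ)
    (hy : ∀ j, y j = ∑ k, c k * u k j) (ω : (Fin m → Fin s) × (Fin m → Bool)) :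
    csQ y y ω = ∑ k, ∑ l, (c k * c l) * csQ (u k) (u l) ω := by
  calc csQ y y ω
      = ∑ j, ∑ j', ∑ k, ∑ l, (c k * c l) * (u k j * u l j' * csM ω.1 ω.2 j j') := by
        rw [csQ]
        refine Finset.sum_congr rfl fun j _ => Finset.sum_congr rfl fun j' _ => ?_
        rw [hy j, hy j', Finset.sum_mul_sum, Finset.sum_mul]
        refine Finset.sum_congr rfl fun k _ => ?_
        rw [Finset.sum_mul]
        exact Finset.sum_congr rfl fun l _ => by ring
    _ = ∑ j, ∑ k, ∑ j', ∑ l, (c k * c l) * (u k j * u l j' * csM ω.1 ω.2 j j') := by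
        exact Finset.sum_congr rfl fun j _ => Finset.sum_comm
    _ = ∑ k, ∑ j, ∑ j', ∑ l, (c k * c l) * (u k j * u l j' * csM ω.1 ω.2 j j') := by
        exact Finset.sum_comm
    _ = ∑ k, ∑ j, ∑ l, ∑ j', (c k * c l) * (u k j * u l j' * csM ω.1 ω.2 j j') := by
        exact Finset.sum_congr rfl fun k _ => Finset.sum_congr rfl fun j _ => Finset.sum_comm
    _ = ∑ k, ∑ l, ∑ j, ∑ j', (c k * c l) * (u k j * u l j' * csM ω.1 ω.2 j j') := by
        exact Finset.sum_congr rfl fun k _ => Finset.sum_comm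
    _ = ∑ k, ∑ l, (c k * c l) * csQ (u k) (u l) ω := by
        refine Finset.sum_congr rfl fun k _ => Finset.sum_congr rfl fun l _ => ?_
        rw [csQ, Finset.mul_sum]
        exact Finset.sum_congr rfl fun j _ => (Finset.mul_sum _ _ _).symm

lemma double_CS {r : ℕ} (c : Fin r → ℝ) (B : Fin r → Fin r → ℝ) :
    (∑ k, ∑ l, (c k * c l) * B k l) ^ 2 ≤ (∑ k, (c k) ^ 2) ^ 2 * (∑ k, ∑ l, (B k l) ^ 2) := by
  have h := Finset.sum_mul_sq_le_sq_mul_sq Finset.univ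
    (fun p : Fin r × Fin r => c p.1 * c p.2) (fun p => B p.1 p.2)
  calc (∑ k, ∑ l, (c k * c l) * B k l) ^ 2
      = (∑ p : Fin r × Fin r, (c p.1 * c p.2) * B p.1 p.2) ^ 2 := by
        rw [Fintype.sum_prod_type]
    _ ≤ (∑ p : Fin r × Fin r, (c p.1 * c p.2) ^ 2) * (∑ p : Fin r × Fin r, (B p.1 p.2) ^ 2) := h
    _ = (∑ k, (c k) ^ 2) ^ 2 * (∑ k, ∑ l, (B k l) ^ 2) := by
        rw [Fintype.sum_prod_type, Fintype.sum_prod_type]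
        congr 1
        rw [pow_two, Finset.sum_mul_sum]
        exact Finset.sum_congr rfl fun k _ => Finset.sum_congr rfl fun l _ => by ring

end CountSketchAux

noncomputable section CountSketchGeom

open CountSketchAux

variable {m n : ℕ} (A : Matrix (Fin m) (Fin n) ℝ)

def gmap : (Fin n → ℝ) →ₗ[ℝ] EuclideanSpace ℝ (Fin m) :=
  (WithLp.linearEquiv 2 ℝ (Fin m → ℝ)).symm.toLinearMap ∘ₗ Matrix.mulVecLin A

def Vsp : Submodule ℝ (EuclideanSpace ℝ (Fin m)) := LinearMap.range (gmap A)

def rdim : ℕ := Module.finrank ℝ (Vsp A)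

lemma rdim_le : rdim A ≤ n := by
  have h := LinearMap.finrank_range_le (gmap A)
  rw [Module.finrank_pi ℝ, Fintype.card_fin] at h
  exact h

def obas : OrthonormalBasis (Fin (rdim A)) ℝ (Vsp A) := stdOrthonormalBasis ℝ (Vsp A)

def uvec (k : Fin (rdim A)) : Fin m → ℝ := ((obas A k : EuclideanSpace ℝ (Fin m)) : Fin m → ℝ)

lemma uvec_on (k l : Fin (rdim A)) :
    ∑ j, uvec A k j * uvec A l j = if k = l then (1:ℝ) else 0 := by
  classical
  have h := orthonormal_iff_ite.mp (obas A).orthonormal k l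
  rw [Submodule.coe_inner, PiLp.inner_apply] at h
  simpa [RCLike.inner_apply, uvec, mul_comm] using h

lemma exists_coords (x : Fin n → ℝ) :
    ∃ c : Fin (rdim A) → ℝ,
      (∀ j, A.mulVec x j = ∑ k, c k * uvec A k j) ∧
      (∑ k, (c k) ^ 2 = ∑ j, (A.mulVec x j) ^ 2) := by
  classical
  have hy : gmap A x ∈ Vsp A := LinearMap.mem_range_self _ x
  set w : Vsp A := ⟨gmap A x, hy⟩ with hw
  refine ⟨fun k => (obas A).repr w k, ?_, ?_⟩
  · intro j
    have h1 : (w : EuclideanSpace ℝ (Fin m)) = ∑ k, (obas A).repr w k • (obas A k : EuclideanSpace ℝ (Fin m)) := by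
      conv_lhs => rw [← (obas A).sum_repr w]
      push_cast
      rfl
    have h2 := congrArg (fun v : EuclideanSpace ℝ (Fin m) => v j) h1
    have h3 : (∑ k, (obas A).repr w k • (obas A k : EuclideanSpace ℝ (Fin m))) j
        = ∑ k, (obas A).repr w k * uvec A k j := by
      rw [WithLp.ofLp_sum, Finset.sum_apply]
      rfl
    rw [h3] at h2
    exact h2
  · have h1 : ‖(obas A).repr w‖ = ‖w‖ := (obas A).repr.norm_map w
    have h2 : ‖(obas A).repr w‖ ^ 2 = ∑ k, ((obas A).repr w k) ^ 2 := by
      rw [EuclideanSpace.norm_eq, Real.sq_sqrt (by positivity)]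
      exact Finset.sum_congr rfl fun k _ => by rw [Real.norm_eq_abs, sq_abs]
    have h3 : ‖w‖ ^ 2 = ∑ j, (A.mulVec x j) ^ 2 := by
      rw [Submodule.coe_norm, EuclideanSpace.norm_eq, Real.sq_sqrt (by positivity)]
      refine Finset.sum_congr rfl fun j _ => ?_
      rw [Real.norm_eq_abs, sq_abs]
      rfl
    exact h2.symm.trans (by rw [h1, h3])

variable {s : ℕ}

lemma det_good (ε : ℝ) (hε0 : 0 < ε) (ω : (Fin m → Fin s) × (Fin m → Bool))
    (hT : ∑ k, ∑ l, (csQ (uvec A k) (uvec A l) ω) ^ 2 ≤ ε ^ 2) (x : Fin n → ℝ) :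
    (1 - ε) * e2norm (A.mulVec x) ^ 2 ≤ e2norm ((countSketch ω.1 ω.2 * A).mulVec x) ^ 2 ∧
    e2norm ((countSketch ω.1 ω.2 * A).mulVec x) ^ 2 ≤ (1 + ε) * e2norm (A.mulVec x) ^ 2 := by
  obtain ⟨c, hc1, hc2⟩ := exists_coords A x
  set y := A.mulVec x with hy
  have hynn : (0:ℝ) ≤ ∑ j, y j ^ 2 := Finset.sum_nonneg fun _ _ => sq_nonneg _
  have hy2 : e2norm y ^ 2 = ∑ j, y j ^ 2 := e2norm_sq y
  have hS : e2norm ((countSketch ω.1 ω.2 * A).mulVec x) ^ 2 = ∑ j, y j ^ 2 + csQ y y ω := by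
    have hmv : ((countSketch ω.1 ω.2 * A).mulVec x) = (countSketch ω.1 ω.2).mulVec y :=
      (Matrix.mulVec_mulVec x (countSketch ω.1 ω.2) A).symm
    rw [hmv, e2norm_sq]
    exact sum_sq_mulVec ω.1 ω.2 y
  have hQb := Q_bilin (uvec A) c y hc1 ω
  have hCS := double_CS c (fun k l => csQ (uvec A k) (uvec A l) ω)
  have habs : |csQ y y ω| ≤ ε * ∑ j, y j ^ 2 := by
    have h1 : (csQ y y ω) ^ 2 ≤ (∑ j, y j ^ 2) ^ 2 * ε ^ 2 := by
      rw [hQb]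
      refine hCS.trans ?_
      rw [hc2]
      exact mul_le_mul_of_nonneg_left hT (by positivity)
    have h2 : (0:ℝ) ≤ ε * ∑ j, y j ^ 2 := mul_nonneg hε0.le hynn
    calc |csQ y y ω| = Real.sqrt ((csQ y y ω) ^ 2) := (Real.sqrt_sq_eq_abs _).symm
      _ ≤ Real.sqrt ((∑ j, y j ^ 2) ^ 2 * ε ^ 2) := Real.sqrt_le_sqrt h1
      _ = ε * ∑ j, y j ^ 2 := by
          rw [show (∑ j, y j ^ 2) ^ 2 * ε ^ 2 = (ε * ∑ j, y j ^ 2) ^ 2 by ring, Real.sqrt_sq h2]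
  obtain ⟨hl, hr⟩ := abs_le.mp habs
  constructor
  · rw [hS, hy2]; linarith
  · rw [hS, hy2]; linarith

end CountSketchGeom

open CountSketchAux in
open Classical in
/-- Count sketch lemma: if `s ≥ (n² + n)/(δ ε²)`, then, with probability at least
`1 − δ` over the uniform (i.e. independent uniform entries) choice of the hash
function `h` and the signs `d`, the count sketch matrix `S` built from `(h, d)` is a
`(1 ± ε)` ℓ₂-subspace embedding for the column space of `A`. Here probability is
expressed as the proportion of outcomes in the finite product space. -/
theorem count_sketch_is_subspace_embedding {m n : ℕ}
    (A : Matrix (Fin m) (Fin n) ℝ)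
    (δ ε : ℝ) (hδ0 : 0 < δ) (hδ1 : δ < 1) (hε0 : 0 < ε) (hε1 : ε < 1)
    (s : ℕ) (hs : 0 < s)
    (hsize : (s : ℝ) ≥ ((n : ℝ) ^ 2 + n) / (δ * ε ^ 2)) :
    (1 : ℝ) - δ ≤
      ((Finset.univ.filter (fun ω : (Fin m → Fin s) × (Fin m → Bool) =>
          ∀ x : Fin n → ℝ,
            (1 - ε) * e2norm (A.mulVec x) ^ 2 ≤
              e2norm ((countSketch ω.1 ω.2 * A).mulVec x) ^ 2 ∧
            e2norm ((countSketch ω.1 ω.2 * A).mulVec x) ^ 2 ≤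
              (1 + ε) * e2norm (A.mulVec x) ^ 2)).card : ℝ) /
        (Fintype.card ((Fin m → Fin s) × (Fin m → Bool)) : ℝ) := by
  classical
  set T : (Fin m → Fin s) × (Fin m → Bool) → ℝ :=
    fun ω => ∑ k, ∑ l, (csQ (uvec A k) (uvec A l) ω) ^ 2 with hTdef
  set N := Fintype.card ((Fin m → Fin s) × (Fin m → Bool)) with hNdef
  have hne : Nonempty ((Fin m → Fin s) × (Fin m → Bool)) :=
    ⟨(fun _ => ⟨0, hs⟩, fun _ => true)⟩
  have hN0 : 0 < N := Fintype.card_pos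
  have hNR : (0:ℝ) < (N:ℝ) := by exact_mod_cast hN0
  have hNreal : (N:ℝ) = (2:ℝ)^m * (s:ℝ)^m := by
    rw [hNdef, Fintype.card_prod, Fintype.card_fun, Fintype.card_fun,
        Fintype.card_fin, Fintype.card_fin, Fintype.card_bool]
    push_cast
    ring
  have hδε : (0:ℝ) < δ * ε ^ 2 := by positivity
  have hnn : ((n:ℝ)^2 + n) ≤ (s:ℝ) * (δ * ε ^ 2) := by
    rw [ge_iff_le, div_le_iff₀ hδε] at hsize
    exact hsize
  have hTnn : ∀ ω, 0 ≤ T ω := fun ω =>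
    Finset.sum_nonneg fun k _ => Finset.sum_nonneg fun l _ => sq_nonneg _
  -- Expectation bound
  have hsum : ∑ ω : (Fin m → Fin s) × (Fin m → Bool), T ω ≤ (N:ℝ) * δ * ε ^ 2 := by
    by_cases hm : m = 0
    · subst hm
      have hz : ∀ ω : (Fin 0 → Fin s) × (Fin 0 → Bool), T ω = 0 := by
        intro ω
        simp [hTdef, csQ]
      rw [Finset.sum_congr rfl fun ω _ => hz ω, Finset.sum_const, smul_zero]
      exact mul_nonneg (mul_nonneg hNR.le hδ0.le) (sq_nonneg ε)
    · have hm1 : 1 ≤ m := Nat.one_le_iff_ne_zero.mpr hm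
      have hswap : ∑ ω : (Fin m → Fin s) × (Fin m → Bool), T ω
          = ∑ k, ∑ l, ∑ ω : (Fin m → Fin s) × (Fin m → Bool), (csQ (uvec A k) (uvec A l) ω) ^ 2 := by
        rw [hTdef, Finset.sum_comm]
        exact Finset.sum_congr rfl fun k _ => Finset.sum_comm
      rw [hswap]
      have hCpos : (0:ℝ) ≤ (2:ℝ)^m * (s:ℝ)^(m-1) := by positivity
      have hbound : ∀ k l : Fin (rdim A),
          ∑ ω : (Fin m → Fin s) × (Fin m → Bool), (csQ (uvec A k) (uvec A l) ω) ^ 2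
            ≤ (2:ℝ)^m * (s:ℝ)^(m-1) * (1 + if k = l then (1:ℝ) else 0) := by
        intro k l
        rw [sum_Q_sq]
        refine mul_le_mul_of_nonneg_left ?_ hCpos
        refine (R_le _ _).trans ?_
        have h1 : ∑ j, uvec A k j ^ 2 = 1 := by
          have := uvec_on A k k
          rw [if_pos rfl] at this
          rw [← this]
          exact Finset.sum_congr rfl fun j _ => (pow_two _)
        have h2 : ∑ j, uvec A l j ^ 2 = 1 := by
          have := uvec_on A l l
          rw [if_pos rfl] at this
          rw [← this]
          exact Finset.sum_congr rfl fun j _ => (pow_two _)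
        have h3 : (∑ j, uvec A k j * uvec A l j) ^ 2 = if k = l then (1:ℝ) else 0 := by
          rw [uvec_on A k l]
          split_ifs <;> norm_num
        rw [h1, h2, h3]
        norm_num
      have hsum2 : ∑ k : Fin (rdim A), ∑ l : Fin (rdim A),
          ((2:ℝ)^m * (s:ℝ)^(m-1) * (1 + if k = l then (1:ℝ) else 0))
          = (2:ℝ)^m * (s:ℝ)^(m-1) * ((rdim A : ℝ)^2 + rdim A) := by
        have inner : ∀ k : Fin (rdim A),
            ∑ l : Fin (rdim A), (1 + if k = l then (1:ℝ) else 0) = (rdim A : ℝ) + 1 := by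
          intro k
          rw [Finset.sum_add_distrib, Finset.sum_const, Finset.card_univ, Fintype.card_fin,
              nsmul_eq_mul, mul_one,
              (Finset.sum_ite_eq Finset.univ k fun _ => (1:ℝ)).trans (if_pos (Finset.mem_univ k))]
        calc ∑ k : Fin (rdim A), ∑ l : Fin (rdim A),
              ((2:ℝ)^m * (s:ℝ)^(m-1) * (1 + if k = l then (1:ℝ) else 0))
            = ∑ k : Fin (rdim A), (2:ℝ)^m * (s:ℝ)^(m-1) * ((rdim A : ℝ) + 1) := by
              refine Finset.sum_congr rfl fun k _ => ?_
              rw [← Finset.mul_sum, inner k]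
          _ = (2:ℝ)^m * (s:ℝ)^(m-1) * ((rdim A : ℝ)^2 + rdim A) := by
              rw [Finset.sum_const, Finset.card_univ, Fintype.card_fin, nsmul_eq_mul]
              ring
      calc ∑ k, ∑ l, ∑ ω : (Fin m → Fin s) × (Fin m → Bool), (csQ (uvec A k) (uvec A l) ω) ^ 2
          ≤ ∑ k : Fin (rdim A), ∑ l : Fin (rdim A),
              ((2:ℝ)^m * (s:ℝ)^(m-1) * (1 + if k = l then (1:ℝ) else 0)) :=
            Finset.sum_le_sum fun k _ => Finset.sum_le_sum fun l _ => hbound k l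
        _ = (2:ℝ)^m * (s:ℝ)^(m-1) * ((rdim A : ℝ)^2 + rdim A) := hsum2
        _ ≤ (2:ℝ)^m * (s:ℝ)^(m-1) * ((n:ℝ)^2 + n) := by
            refine mul_le_mul_of_nonneg_left ?_ hCpos
            have hr : (rdim A : ℝ) ≤ n := by exact_mod_cast rdim_le A
            have hr0 : (0:ℝ) ≤ (rdim A : ℝ) := Nat.cast_nonneg _
            nlinarith
        _ ≤ (2:ℝ)^m * (s:ℝ)^(m-1) * ((s:ℝ) * (δ * ε ^ 2)) :=
            mul_le_mul_of_nonneg_left hnn hCpos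
        _ = (N:ℝ) * δ * ε ^ 2 := by
            have hps : (s:ℝ)^(m-1) * s = (s:ℝ)^m := by
              rw [← pow_succ]
              congr 1
              omega
            rw [hNreal, ← hps]
            ring
  -- Markov
  set Pbad := Finset.univ.filter (fun ω : (Fin m → Fin s) × (Fin m → Bool) => ¬ (T ω ≤ ε ^ 2)) with hPdef
  have hPb : (Pbad.card : ℝ) * ε ^ 2 ≤ ∑ ω ∈ Pbad, T ω := by
    have := Finset.card_nsmul_le_sum Pbad T (ε ^ 2)
      (fun ω hω => le_of_lt (lt_of_not_ge (Finset.mem_filter.mp hω).2))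
    simpa [nsmul_eq_mul] using this
  have hPb2 : ∑ ω ∈ Pbad, T ω ≤ ∑ ω, T ω :=
    Finset.sum_le_sum_of_subset_of_nonneg (Finset.filter_subset _ _) (fun ω _ _ => hTnn ω)
  have hcard : (Pbad.card : ℝ) ≤ (N:ℝ) * δ := by
    have h := hPb.trans (hPb2.trans hsum)
    have hε2 : (0:ℝ) < ε ^ 2 := by positivity
    nlinarith
  have hGsub : Finset.univ.filter (fun ω : (Fin m → Fin s) × (Fin m → Bool) => T ω ≤ ε ^ 2)
      ⊆ Finset.univ.filter (fun ω : (Fin m → Fin s) × (Fin m → Bool) =>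
          ∀ x : Fin n → ℝ,
            (1 - ε) * e2norm (A.mulVec x) ^ 2 ≤
              e2norm ((countSketch ω.1 ω.2 * A).mulVec x) ^ 2 ∧
            e2norm ((countSketch ω.1 ω.2 * A).mulVec x) ^ 2 ≤
              (1 + ε) * e2norm (A.mulVec x) ^ 2) := by
    intro ω hω
    rw [Finset.mem_filter] at hω ⊢
    exact ⟨hω.1, fun x => det_good A ε hε0 ω hω.2 x⟩
  have hcount := Finset.card_filter_add_card_filter_not
    (s := (Finset.univ : Finset ((Fin m → Fin s) × (Fin m → Bool))))
    (fun ω => T ω ≤ ε ^ 2)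
  rw [le_div_iff₀ hNR]
  have hle : ((Finset.univ.filter (fun ω : (Fin m → Fin s) × (Fin m → Bool) => T ω ≤ ε ^ 2)).card : ℝ)
      ≤ ((Finset.univ.filter (fun ω : (Fin m → Fin s) × (Fin m → Bool) =>
          ∀ x : Fin n → ℝ,
            (1 - ε) * e2norm (A.mulVec x) ^ 2 ≤
              e2norm ((countSketch ω.1 ω.2 * A).mulVec x) ^ 2 ∧
            e2norm ((countSketch ω.1 ω.2 * A).mulVec x) ^ 2 ≤
              (1 + ε) * e2norm (A.mulVec x) ^ 2)).card : ℝ) := by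
    exact_mod_cast Finset.card_le_card hGsub
  have hcount' : ((Finset.univ.filter (fun ω : (Fin m → Fin s) × (Fin m → Bool) => T ω ≤ ε ^ 2)).card : ℝ)
      + (Pbad.card : ℝ) = (N:ℝ) := by
    rw [hPdef]
    exact_mod_cast hcount
  linarith
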